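/- Let w_i, w_j be vectors in R^d with c ≤ ‖w_i‖ ≤ ‖w_j‖ ≤ 1 and ‖w_j − w_i‖ ≥ c for some constant c ∈ (0,1). For a constant K > 0 define v_i = K·w_i/(c²‖w_i‖²) and v_j = K·w_j/(c²‖w_j‖²). Then ‖v_i − v_j‖ ≥ K/c. -/

import Mathlib

set_option maxHeartbeats 1000000


theorem stmt_0 (d : ℕ) (hd : 1 ≤ d) (wi wj : EuclideanSpace ℝ (Fin d))
    (c K : ℝ) (hc : 0 < c) (hc1 : c < 1) (hK : 0 < K)
    (h1 : c ≤ ‖wi‖) (h2 : ‖wi‖ ≤ ‖wj‖) (h3 : ‖wj‖ ≤ 1)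
    (hsep : c ≤ ‖wj - wi‖) :
    K / c ≤ ‖(K / (c ^ 2 * ‖wi‖ ^ 2)) • wi - (K / (c ^ 2 * ‖wj‖ ^ 2)) • wj‖ := by
  set a := ‖wi‖ with ha
  set b := ‖wj‖ with hb
  have ha0 : 0 < a := lt_of_lt_of_le hc h1
  have hb0 : 0 < b := lt_of_lt_of_le ha0 h2
  set s := K / (c ^ 2 * a ^ 2) with hs
  set t := K / (c ^ 2 * b ^ 2) with ht
  have hs0 : 0 < s := div_pos hK (by positivity)
  have ht0 : 0 < t := div_pos hK (by positivity)
  set p := (inner ℝ wi wj : ℝ) with hp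
  have e1 : ‖wj - wi‖ ^ 2 = b ^ 2 - 2 * p + a ^ 2 := by
    rw [@norm_sub_sq_real, real_inner_comm]
  have e2 : ‖s • wi - t • wj‖ ^ 2 = s ^ 2 * a ^ 2 - 2 * (s * t * p) + t ^ 2 * b ^ 2 := by
    rw [@norm_sub_sq_real, real_inner_smul_left, real_inner_smul_right,
      norm_smul, norm_smul]
    simp [abs_of_pos hs0, abs_of_pos ht0, ← hp]
    ring
  have hsep2 : c ^ 2 ≤ ‖wj - wi‖ ^ 2 := by
    have := pow_le_pow_left₀ hc.le hsep 2
    linarith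
  have hple : 2 * p ≤ a ^ 2 + b ^ 2 - c ^ 2 := by
    rw [e1] at hsep2; linarith
  -- lower bound on the square
  have key : (K / c) ^ 2 ≤ ‖s • wi - t • wj‖ ^ 2 := by
    rw [e2]
    have hstep : s ^ 2 * a ^ 2 - s * t * (a ^ 2 + b ^ 2 - c ^ 2) + t ^ 2 * b ^ 2
        ≤ s ^ 2 * a ^ 2 - 2 * (s * t * p) + t ^ 2 * b ^ 2 := by
      nlinarith [mul_pos hs0 ht0]
    refine le_trans ?_ hstep
    have hval : s ^ 2 * a ^ 2 - s * t * (a ^ 2 + b ^ 2 - c ^ 2) + t ^ 2 * b ^ 2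
        = K ^ 2 / (c ^ 2 * a ^ 2 * b ^ 2) := by
      rw [hs, ht]
      field_simp
      ring
    rw [hval, div_pow]
    have ha1 : a ≤ 1 := h2.trans h3
    have ha2 : a ^ 2 ≤ 1 := pow_le_one₀ ha0.le ha1
    have hb2 : b ^ 2 ≤ 1 := pow_le_one₀ hb0.le h3
    have hab2 : a ^ 2 * b ^ 2 ≤ 1 := by
      calc a ^ 2 * b ^ 2 ≤ 1 * 1 := mul_le_mul ha2 hb2 (by positivity) (by norm_num)
        _ = 1 := by norm_num
    have hab : c ^ 2 * a ^ 2 * b ^ 2 ≤ c ^ 2 * 1 := by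
      calc c ^ 2 * a ^ 2 * b ^ 2 = c ^ 2 * (a ^ 2 * b ^ 2) := by ring
        _ ≤ c ^ 2 * 1 := by
            exact mul_le_mul_of_nonneg_left hab2 (sq_nonneg c)
    calc K ^ 2 / c ^ 2 ≤ K ^ 2 / (c ^ 2 * a ^ 2 * b ^ 2) := by
          apply div_le_div_of_nonneg_left (by positivity) (by positivity)
          linarith
      _ = K ^ 2 / (c ^ 2 * a ^ 2 * b ^ 2) := rfl
  have hX : 0 ≤ ‖s • wi - t • wj‖ := norm_nonneg _
  nlinarith [key, hX, div_pos hK hc]
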